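/- All elements of F_b(x) have the same value of Σ_i T_b(y)_i^2; equivalently, any two elements of F_b(x) are equally b-diverse (each transformed vector majorizes the other). -/

import Mathlib

open Finset

/-- `x` majorizes `y`: for each `k`, the sum of the `k` largest coordinates of `x`
is at least that of `y`, and the total sums agree.  (Stated via the equivalent
subset formulation.) -/
def maj {n : ℕ} (x y : Fin n → ℝ) : Prop :=
  (∀ B : Finset (Fin n), ∃ A : Finset (Fin n),
      A.card = B.card ∧ ∑ i ∈ B, y i ≤ ∑ i ∈ A, x i) ∧
  ∑ i, x i = ∑ i, y i

/-- strict majorization -/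
def smaj {n : ℕ} (x y : Fin n → ℝ) : Prop := maj x y ∧ ¬ maj y x

/-- The biased transformation `T_b(x) = x + (Σ_i x_i)·b`. -/
noncomputable def Tb {n : ℕ} (b : Fin n → ℝ) (x : Fin n → ℤ) : Fin n → ℝ :=
  fun i => (x i : ℝ) + (∑ j, (x j : ℝ)) * b i

/-- The budget set `B(x)` for capacity `q`. -/
def memB {n : ℕ} (q : ℕ) (x y : Fin n → ℤ) : Prop :=
  (∀ i, 0 ≤ y i) ∧ (∀ i, y i ≤ x i) ∧ ∑ i, y i ≤ (q : ℤ)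

/-- The `b`-targeting Schur frontier `F_b(x)`. -/
def memF {n : ℕ} (q : ℕ) (b : Fin n → ℝ) (x y : Fin n → ℤ) : Prop :=
  memB q x y ∧
    ¬ ∃ z : Fin n → ℤ, memB q x z ∧ ((y ≤ z ∧ y ≠ z) ∨ smaj (Tb b y) (Tb b z))


/-- sum of a "transfer by c from i to j" equals original sum, over any set
containing both i and j -/
lemma sum_shift {M : Type*} [AddCommGroup M] {n : ℕ} (f : Fin n → M) (c : M)
    {i j : Fin n} (hij : i ≠ j) {B : Finset (Fin n)} (hi : i ∈ B) (hj : j ∈ B) :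
    ∑ k ∈ B, (if k = i then f i - c else if k = j then f j + c else f k) = ∑ k ∈ B, f k := by
  have h1 : ∀ k, (if k = i then f i - c else if k = j then f j + c else f k)
      = f k + (if k = i then -c else if k = j then c else 0) := by
    intro k
    split_ifs with h h' <;> subst_eqs <;> abel
  simp_rw [h1, Finset.sum_add_distrib]
  have h2 : ∑ k ∈ B, (if k = i then -c else if k = j then c else 0) = 0 := by
    rw [← Finset.sum_subset (show ({i, j} : Finset (Fin n)) ⊆ B by
      intro k hk; simp at hk; rcases hk with rfl | rfl <;> assumption)]
    · rw [Finset.sum_pair hij]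
      simp [hij.symm, hij]
    · intro k _ hk
      simp at hk
      rw [if_neg hk.1, if_neg hk.2]
  rw [h2, add_zero]

lemma transfer {n : ℕ} (u : Fin n → ℝ) (i j : Fin n) (hij : i ≠ j) (h : u j + 1 < u i) :
    smaj u (fun k => if k = i then u i - 1 else if k = j then u j + 1 else u k) := by
  set u' : Fin n → ℝ := fun k => if k = i then u i - 1 else if k = j then u j + 1 else u k with hu'
  have hu'i : u' i = u i - 1 := by simp [hu']
  have hu'j : u' j = u j + 1 := by simp [hu', hij.symm]
  have hu'k : ∀ k, k ≠ i → k ≠ j → u' k = u k := by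
    intro k h1 h2; simp [hu', h1, h2]
  have hshift : ∀ k, u' k = if k = i then u i - 1 else if k = j then u j + 1 else u k := fun k => rfl
  have hsum : ∀ B : Finset (Fin n), i ∈ B → j ∈ B → ∑ k ∈ B, u' k = ∑ k ∈ B, u k := by
    intro B hi hj
    have : ∀ k, u' k = if k = i then u i - (1:ℝ) else if k = j then u j + 1 else u k := fun k => rfl
    simp_rw [this]
    exact sum_shift u 1 hij hi hj
  constructor
  · -- maj u u'
    constructor
    · intro B
      by_cases hjB : j ∈ B
      · by_cases hiB : i ∈ B
        · exact ⟨B, rfl, (hsum B hiB hjB).le⟩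
        · refine ⟨insert i (B.erase j), ?_, ?_⟩
          · rw [Finset.card_insert_of_notMem (fun hmem => hiB (Finset.mem_of_mem_erase hmem)),
              Finset.card_erase_add_one hjB]
          · rw [Finset.sum_insert (fun hmem => hiB (Finset.mem_of_mem_erase hmem))]
            rw [← Finset.add_sum_erase B u' hjB, hu'j]
            have : ∑ k ∈ B.erase j, u' k = ∑ k ∈ B.erase j, u k := by
              refine Finset.sum_congr rfl (fun k hk => ?_)
              exact hu'k k (fun he => hiB (he ▸ Finset.mem_of_mem_erase hk))
                (Finset.ne_of_mem_erase hk)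
            rw [this]
            linarith
      · refine ⟨B, rfl, Finset.sum_le_sum (fun k hk => ?_)⟩
        by_cases hki : k = i
        · subst hki; rw [hu'i]; linarith
        · rw [hu'k k hki (fun he => hjB (he ▸ hk))]
    · exact (hsum univ (mem_univ i) (mem_univ j)).symm
  · -- ¬ maj u' u
    intro hm
    set a := u i with ha
    set B := univ.filter (fun k => a ≤ u k) with hB
    have hiB : i ∈ B := by simp [hB]; exact le_rfl
    have hjB : j ∉ B := by simp [hB]; linarith
    obtain ⟨A, hAc, hle⟩ := hm.1 B
    set C := B.erase i with hC
    set D := A ∩ C with hD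
    set E := A \ C with hE
    have hDsubC : D ⊆ C := Finset.inter_subset_right
    have hDB : D ⊆ B := hDsubC.trans (Finset.erase_subset i B)
    have hcards : D.card + E.card = A.card := Finset.card_inter_add_card_sdiff A C
    have hCc : C.card + 1 = B.card := Finset.card_erase_add_one hiB
    have hEne : E.Nonempty := by
      rw [← Finset.card_pos]
      have := Finset.card_le_card hDsubC
      omega
    have hEu : ∀ k ∈ E, u' k < a := by
      intro k hk
      have hkC : k ∉ C := (Finset.mem_sdiff.1 hk).2
      by_cases hki : k = i
      · subst hki; rw [hu'i]; linarith
      · by_cases hkj : k = j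
        · subst hkj; rw [hu'j]; exact h
        · rw [hu'k k hki hkj]
          by_cases hkB : k ∈ B
          · exact absurd (Finset.mem_erase.2 ⟨hki, hkB⟩) hkC
          · have := hkB
            simp [hB] at this
            exact this
    have hEsum : ∑ k ∈ E, u' k < (E.card : ℝ) * a := by
      calc ∑ k ∈ E, u' k < ∑ _k ∈ E, a := Finset.sum_lt_sum_of_nonempty hEne hEu
      _ = (E.card : ℝ) * a := by rw [Finset.sum_const, nsmul_eq_mul]
    have hDsum : ∑ k ∈ D, u' k = ∑ k ∈ D, u k := by
      refine Finset.sum_congr rfl (fun k hk => ?_)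
      have hkC := hDsubC hk
      exact hu'k k (Finset.ne_of_mem_erase hkC)
        (fun he => hjB (he ▸ (Finset.mem_of_mem_erase hkC)))
    have hBDcard : (B \ D).card = E.card := by
      rw [Finset.card_sdiff_of_subset hDB]; omega
    have hBD : ∑ k ∈ D, u k + (E.card : ℝ) * a ≤ ∑ k ∈ B, u k := by
      have h1 : ∑ k ∈ B \ D, u k + ∑ k ∈ D, u k = ∑ k ∈ B, u k := Finset.sum_sdiff hDB
      have h2 : ((B \ D).card : ℝ) * a ≤ ∑ k ∈ B \ D, u k := by
        rw [← nsmul_eq_mul]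
        refine Finset.card_nsmul_le_sum _ _ _ (fun k hk => ?_)
        have := (Finset.mem_sdiff.1 hk).1
        simp [hB] at this
        exact this
      rw [hBDcard] at h2
      linarith
    have hAsum : ∑ k ∈ D, u' k + ∑ k ∈ E, u' k = ∑ k ∈ A, u' k :=
      Finset.sum_inter_add_sum_sdiff A C u'
    linarith


lemma step {n : ℕ} {q : ℕ} {b : Fin n → ℝ} {x y : Fin n → ℤ} (hy : memF q b x y)
    (i j : Fin n) (hij : i ≠ j) (h0 : 0 < y i) (hxj : y j < x j) :
    Tb b y i ≤ Tb b y j + 1 := by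
  by_contra hcon
  push_neg at hcon
  set y' : Fin n → ℤ := fun k => if k = i then y i - 1 else if k = j then y j + 1 else y k with hy'
  have hsum' : ∑ k, y' k = ∑ k, y k := sum_shift y 1 hij (mem_univ i) (mem_univ j)
  have hB' : memB q x y' := by
    refine ⟨fun k => ?_, fun k => ?_, ?_⟩
    · simp only [hy']; split_ifs with h1 h2
      · omega
      · have := hy.1.1 j; omega
      · exact hy.1.1 k
    · simp only [hy']; split_ifs with h1 h2
      · rw [h1]; have := hy.1.2.1 i; omega
      · rw [h2]; omega
      · exact hy.1.2.1 k
    · rw [hsum']; exact hy.1.2.2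
  have hT : Tb b y' = fun k => if k = i then Tb b y i - 1 else if k = j then Tb b y j + 1
      else Tb b y k := by
    funext k
    have hcast : (∑ m, (y' m : ℝ)) = ∑ m, (y m : ℝ) := by
      have : ((∑ m, y' m : ℤ) : ℝ) = ((∑ m, y m : ℤ) : ℝ) := by rw [hsum']
      push_cast at this
      exact this
    simp only [Tb, hcast]; simp only [hy']
    split_ifs with h1 h2
    · subst h1; push_cast; ring
    · subst h2; push_cast; ring
    · ring
  exact hy.2 ⟨y', hB', Or.inr (hT ▸ transfer (Tb b y) i j hij hcon)⟩

lemma sum_le {n : ℕ} {q : ℕ} {b : Fin n → ℝ} {x y z : Fin n → ℤ}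
    (hy : memF q b x y) (hz : memB q x z) : ∑ i, z i ≤ ∑ i, y i := by
  by_contra h
  push_neg at h
  have hxy : ∃ i, y i < x i := by
    by_contra hc
    push_neg at hc
    have : ∑ i, z i ≤ ∑ i, y i :=
      le_trans (Finset.sum_le_sum (fun i _ => hz.2.1 i))
        (Finset.sum_le_sum (fun i _ => hc i))
    omega
  obtain ⟨i, hi⟩ := hxy
  set w : Fin n → ℤ := fun k => if k = i then y i + 1 else y k with hw
  have hsw : ∑ k, w k = ∑ k, y k + 1 := by
    rw [← Finset.add_sum_erase univ w (mem_univ i), ← Finset.add_sum_erase univ y (mem_univ i)]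
    have h1 : w i = y i + 1 := by simp [hw]
    have h2 : ∑ k ∈ univ.erase i, w k = ∑ k ∈ univ.erase i, y k :=
      Finset.sum_congr rfl (fun k hk => by simp [hw, Finset.ne_of_mem_erase hk])
    rw [h1, h2]; ring
  have hBw : memB q x w := by
    refine ⟨fun k => ?_, fun k => ?_, ?_⟩
    · simp only [hw]; split_ifs with h1
      · have := hy.1.1 i; omega
      · exact hy.1.1 k
    · simp only [hw]; split_ifs with h1
      · subst h1; omega
      · exact hy.1.2.1 k
    · rw [hsw]
      have := hz.2.2
      omega
  refine hy.2 ⟨w, hBw, Or.inl ⟨fun k => ?_, fun he => ?_⟩⟩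
  · simp only [hw]; split_ifs with h1
    · subst h1; omega
    · omega
  · have h2 : y i = w i := by rw [he]
    simp only [hw, if_pos rfl] at h2
    omega

lemma maj_refl {n : ℕ} (u : Fin n → ℝ) : maj u u :=
  ⟨fun B => ⟨B, rfl, le_refl _⟩, rfl⟩

lemma maj_of_comp {n : ℕ} {u v : Fin n → ℝ} (σ : Equiv.Perm (Fin n))
    (h : ∀ k, v k = u (σ k)) : maj u v := by
  constructor
  · intro B
    refine ⟨B.image σ, Finset.card_image_of_injective _ σ.injective, ?_⟩
    rw [Finset.sum_image (fun a _ c _ hac => σ.injective hac)]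
    exact le_of_eq (Finset.sum_congr rfl (fun k _ => h k))
  · rw [← Equiv.sum_comp σ u]
    exact (Finset.sum_congr rfl (fun k _ => h k)).symm


/-- Any two frontier elements have equal sums of squared transformed coordinates,
and are equally `b`-diverse: each transformed vector majorizes the other. -/
theorem stmt10 {n : ℕ} (q : ℕ) (hq : 0 < q) (b : Fin n → ℝ) (hb : ∑ i, b i = 0)
    (x : Fin n → ℤ) (hx : ∀ i, 0 ≤ x i) (y z : Fin n → ℤ)
    (hy : memF q b x y) (hz : memF q b x z) :
    ∑ i, (Tb b y i) ^ 2 = ∑ i, (Tb b z i) ^ 2 ∧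
      maj (Tb b y) (Tb b z) ∧ maj (Tb b z) (Tb b y) := by
  classical
  have hsz : ∑ i, z i = ∑ i, y i := le_antisymm (sum_le hy hz.1) (sum_le hz hy.1)
  by_cases hyz : y = z
  · subst hyz; exact ⟨rfl, maj_refl _, maj_refl _⟩
  set I : Finset (Fin n) := univ.filter (fun k => z k < y k) with hI
  set J : Finset (Fin n) := univ.filter (fun k => y k < z k) with hJ
  have hImem : ∀ k, k ∈ I ↔ z k < y k := fun k => by simp [hI]
  have hJmem : ∀ k, k ∈ J ↔ y k < z k := fun k => by simp [hJ]
  have hIJ : ∀ k, k ∈ I → k ∉ J := by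
    intro k h1 h2; rw [hImem] at h1; rw [hJmem] at h2; omega
  have hIne : I.Nonempty := by
    by_contra hIe
    rw [Finset.not_nonempty_iff_eq_empty] at hIe
    have hle : ∀ k, y k ≤ z k := by
      intro k
      by_contra hc
      push_neg at hc
      have : k ∈ I := (hImem k).2 hc
      simp [hIe] at this
    apply hyz
    funext k
    by_contra hk
    have hlt : y k < z k := lt_of_le_of_ne (hle k) hk
    have : ∑ i, y i < ∑ i, z i :=
      Finset.sum_lt_sum (fun i _ => hle i) ⟨k, mem_univ k, hlt⟩
    omega
  have hJne : J.Nonempty := by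
    by_contra hJe
    rw [Finset.not_nonempty_iff_eq_empty] at hJe
    have hle : ∀ k, z k ≤ y k := by
      intro k
      by_contra hc
      push_neg at hc
      have : k ∈ J := (hJmem k).2 hc
      simp [hJe] at this
    apply hyz
    funext k
    by_contra hk
    have hlt : z k < y k := lt_of_le_of_ne (hle k) (Ne.symm hk)
    have : ∑ i, z i < ∑ i, y i :=
      Finset.sum_lt_sum (fun i _ => hle i) ⟨k, mem_univ k, hlt⟩
    omega
  have hScast : (∑ m, (z m : ℝ)) = ∑ m, (y m : ℝ) := by
    have h1 : ((∑ m, z m : ℤ) : ℝ) = ((∑ m, y m : ℤ) : ℝ) := by rw [hsz]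
    push_cast at h1
    exact h1
  have hTz : ∀ k, Tb b z k = (z k : ℝ) + (∑ m, (y m : ℝ)) * b k := by
    intro k; unfold Tb; rw [hScast]
  have key : ∀ i ∈ I, ∀ j ∈ J, z i = y i - 1 ∧ z j = y j + 1 ∧ Tb b y i = Tb b y j + 1 := by
    intro i hi j hj
    have hzi : z i < y i := (hImem i).1 hi
    have hyj : y j < z j := (hJmem j).1 hj
    have hij : i ≠ j := fun he => by subst he; omega
    have h1 : Tb b y i ≤ Tb b y j + 1 :=
      step hy i j hij (lt_of_le_of_lt (hz.1.1 i) hzi) (lt_of_lt_of_le hyj (hz.1.2.1 j))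
    have h2 : Tb b z j ≤ Tb b z i + 1 :=
      step hz j i hij.symm (lt_of_le_of_lt (hy.1.1 j) hyj) (lt_of_lt_of_le hzi (hy.1.2.1 i))
    rw [hTz j, hTz i] at h2
    have h1' : (y i : ℝ) + (∑ m, (y m : ℝ)) * b i
        ≤ (y j : ℝ) + (∑ m, (y m : ℝ)) * b j + 1 := h1
    have hsum2 : ((y i : ℝ) - z i) + ((z j : ℝ) - y j) ≤ 2 := by linarith
    have hZ : (y i - z i) + (z j - y j) ≤ (2 : ℤ) := by exact_mod_cast hsum2
    have hzi' : z i = y i - 1 := by omega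
    have hzj' : z j = y j + 1 := by omega
    refine ⟨hzi', hzj', le_antisymm h1 ?_⟩
    have hc1 : (z j : ℝ) = (y j : ℝ) + 1 := by exact_mod_cast hzj'
    have hc2 : (z i : ℝ) = (y i : ℝ) - 1 := by exact_mod_cast hzi'
    show Tb b y j + 1 ≤ Tb b y i
    unfold Tb
    rw [hc1, hc2] at h2
    linarith
  obtain ⟨i0, hi0⟩ := hIne
  obtain ⟨j0, hj0⟩ := hJne
  set α : ℝ := Tb b y i0 with hα
  have hyI : ∀ i ∈ I, Tb b y i = α := by
    intro i hi
    rw [(key i hi j0 hj0).2.2, hα, (key i0 hi0 j0 hj0).2.2]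
  have hyJ : ∀ j ∈ J, Tb b y j = α - 1 := by
    intro j hj
    have h1 := (key i0 hi0 j hj).2.2
    rw [← hα] at h1
    linarith
  have hzI : ∀ i ∈ I, Tb b z i = α - 1 := by
    intro i hi
    have h4 := (key i hi j0 hj0).1
    have h5 := hyI i hi
    unfold Tb at h5
    rw [hTz i]
    have hc : (z i : ℝ) = (y i : ℝ) - 1 := by exact_mod_cast h4
    rw [hc]
    linarith
  have hzJ : ∀ j ∈ J, Tb b z j = α := by
    intro j hj
    have h4 := (key i0 hi0 j hj).2.1
    have h5 := hyJ j hj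
    unfold Tb at h5
    rw [hTz j]
    have hc : (z j : ℝ) = (y j : ℝ) + 1 := by exact_mod_cast h4
    rw [hc]
    linarith
  have hrest : ∀ k, k ∉ I → k ∉ J → Tb b z k = Tb b y k := by
    intro k h1 h2
    rw [hImem, not_lt] at h1
    rw [hJmem, not_lt] at h2
    have hzk : z k = y k := le_antisymm h2 h1
    rw [hTz k, hzk]
    rfl
  have hIcard : I.card = J.card := by
    have h0 : ∑ k, (y k - z k) = 0 := by
      rw [Finset.sum_sub_distrib, hsz]; ring
    have h1 : ∑ k ∈ I ∪ J, (y k - z k) = ∑ k, (y k - z k) := by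
      refine Finset.sum_subset (Finset.subset_univ _) (fun k _ hk => ?_)
      rw [Finset.mem_union] at hk
      push_neg at hk
      have ha := hk.1; have hb2 := hk.2
      rw [hImem, not_lt] at ha
      rw [hJmem, not_lt] at hb2
      omega
    have hdisj : Disjoint I J := Finset.disjoint_left.2 hIJ
    rw [Finset.sum_union hdisj] at h1
    have hI1 : ∑ k ∈ I, (y k - z k) = (I.card : ℤ) := by
      rw [Finset.sum_congr rfl (fun k hk => show y k - z k = 1 by
        have := (key k hk j0 hj0).1; omega)]
      simp
    have hJ1 : ∑ k ∈ J, (y k - z k) = -(J.card : ℤ) := by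
      rw [Finset.sum_congr rfl (fun k hk => show y k - z k = -1 by
        have := (key i0 hi0 k hk).2.1; omega)]
      simp
    rw [hI1, hJ1, h0] at h1
    omega
  have e : {a // a ∈ I} ≃ {a // a ∈ J} := Finset.equivOfCardEq hIcard
  set f : Fin n → Fin n := fun k =>
    if h : k ∈ I then (e ⟨k, h⟩ : Fin n)
    else if h : k ∈ J then ((e.symm ⟨k, h⟩ : {a // a ∈ I}) : Fin n)
    else k with hf
  have hfI : ∀ k (h : k ∈ I), f k = (e ⟨k, h⟩ : Fin n) := by
    intro k h; simp only [hf]; rw [dif_pos h]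
  have hfJ : ∀ k (h : k ∉ I) (h' : k ∈ J), f k = ((e.symm ⟨k, h'⟩ : {a // a ∈ I}) : Fin n) := by
    intro k h h'; simp only [hf]; rw [dif_neg h, dif_pos h']
  have hfO : ∀ k, k ∉ I → k ∉ J → f k = k := by
    intro k h h'; simp only [hf]; rw [dif_neg h, dif_neg h']
  have hJI : ∀ k, k ∈ J → k ∉ I := fun k h1 h2 => hIJ k h2 h1
  have hinv : Function.Involutive f := by
    intro k
    by_cases h : k ∈ I
    · rw [hfI k h]
      have h2 : ((e ⟨k, h⟩ : {a // a ∈ J}) : Fin n) ∈ J := (e ⟨k, h⟩).2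
      rw [hfJ _ (hJI _ h2) h2]
      have h3 : (⟨((e ⟨k, h⟩ : {a // a ∈ J}) : Fin n), h2⟩ : {a // a ∈ J}) = e ⟨k, h⟩ :=
        Subtype.ext rfl
      rw [h3, Equiv.symm_apply_apply]
    · by_cases h' : k ∈ J
      · rw [hfJ k h h']
        have h2 : ((e.symm ⟨k, h'⟩ : {a // a ∈ I}) : Fin n) ∈ I := (e.symm ⟨k, h'⟩).2
        rw [hfI _ h2]
        have h3 : (⟨((e.symm ⟨k, h'⟩ : {a // a ∈ I}) : Fin n), h2⟩ : {a // a ∈ I})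
            = e.symm ⟨k, h'⟩ := Subtype.ext rfl
        rw [h3, Equiv.apply_symm_apply]
      · rw [hfO k h h', hfO k h h']
  set σ : Equiv.Perm (Fin n) := hinv.toPerm f with hσdef
  have hσf : ∀ k, σ k = f k := fun k => rfl
  have hσ : ∀ k, Tb b z k = Tb b y (σ k) := by
    intro k
    rw [hσf]
    by_cases h : k ∈ I
    · rw [hfI k h, hyJ _ (e ⟨k, h⟩).2, hzI k h]
    · by_cases h' : k ∈ J
      · rw [hfJ k h h', hyI _ (e.symm ⟨k, h'⟩).2, hzJ k h']
      · rw [hfO k h h', hrest k h h']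
  have hσ' : ∀ k, Tb b y k = Tb b z (σ.symm k) := by
    intro k
    rw [hσ (σ.symm k), Equiv.apply_symm_apply]
  refine ⟨?_, maj_of_comp σ hσ, maj_of_comp σ.symm hσ'⟩
  calc ∑ i, Tb b y i ^ 2 = ∑ i, Tb b y (σ i) ^ 2 :=
        (Equiv.sum_comp σ (fun k => Tb b y k ^ 2)).symm
    _ = ∑ i, Tb b z i ^ 2 := Finset.sum_congr rfl (fun k _ => by rw [hσ k])
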